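/- Let K and L be pointed sets and let m : Γ × Γ → Γ denote the smash product functor on finite pointed sets (composed with an identification 𝐦 ∧ 𝐧 ≅ 𝐦𝐧). Then the left Kan extension of the functor (𝐚,𝐛) ↦ Map(𝐚,K) × Map(𝐛,L) along m is naturally isomorphic to the functor 𝐜 ↦ Map(𝐜, K ∧ L), where Map denotes based maps, viewed as contravariant functors on Γ (i.e. this is a Kan extension of functors Γᵒᵖ × Γᵒᵖ → Set along mᵒᵖ). -/

import Mathlib

/-- Morphisms `𝐧 → 𝐦` in the category `Γ` of finite pointed sets
`𝐧 = {0,…,n}` with basepoint `0`. -/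
def GHom (n m : ℕ) := {f : Fin (n + 1) → Fin (m + 1) // f 0 = 0}

/-- Composition in `Γ`. -/
def gcomp {c n m : ℕ} (γ : GHom c n) (δ : GHom n m) : GHom c m :=
  ⟨fun x => δ.1 (γ.1 x), by show δ.1 (γ.1 0) = 0; rw [γ.2, δ.2]⟩

/-- Based maps `𝐧 → X` into a pointed set `X`, i.e. the value at `𝐧` of the
contravariant functor `X^× : Γᵒᵖ → Set`, `𝐧 ↦ Map(𝐧, X)`. -/
def BMap (n : ℕ) (X : Type) [Inhabited X] := {f : Fin (n + 1) → X // f 0 = default}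

/-- Functoriality of `X^×`: precomposition of a based map with a `Γ`-morphism. -/
def pull {X : Type} [Inhabited X] {n m : ℕ} (α : GHom n m) (f : BMap m X) :
    BMap n X :=
  ⟨fun i => f.1 (α.1 i), by show f.1 (α.1 0) = default; rw [α.2, f.2]⟩

/-- The lexicographic identification `𝐚 ∧ 𝐛 ≅ 𝐚𝐛`: the non-basepoint pair
`(i, j)` goes to `(i-1)·b + j`, and degenerate pairs go to the basepoint. -/
def enc (a b : ℕ) (i : Fin (a + 1)) (j : Fin (b + 1)) : Fin (a * b + 1) :=
  if h : i.1 = 0 ∨ j.1 = 0 then 0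
  else
    ⟨(i.1 - 1) * b + j.1,
      Nat.lt_succ_of_le (by
        have hi := i.isLt
        have hj := j.isLt
        calc (i.1 - 1) * b + j.1 ≤ (a - 1) * b + b :=
              add_le_add (Nat.mul_le_mul_right _ (by omega)) (by omega)
          _ = (a - 1 + 1) * b := (Nat.succ_mul _ _).symm
          _ = a * b := by congr 1; omega)⟩

/-- The inverse of the lexicographic identification `𝐚 ∧ 𝐛 ≅ 𝐚𝐛`. -/
def dec (a b : ℕ) (c : Fin (a * b + 1)) : Fin (a + 1) × Fin (b + 1) :=
  if h : c.1 = 0 then (0, 0)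
  else
    have hc := c.isLt
    have hb : 0 < b := by
      rcases Nat.eq_zero_or_pos b with hb | hb
      · exfalso
        have h0 : a * b = 0 := by rw [hb, Nat.mul_zero]
        omega
      · exact hb
    (⟨(c.1 - 1) / b + 1,
        Nat.succ_lt_succ ((Nat.div_lt_iff_lt_mul hb).2
          (lt_of_lt_of_le (Nat.sub_lt (Nat.pos_of_ne_zero h) Nat.one_pos)
            (Nat.lt_succ_iff.1 hc)))⟩,
     ⟨(c.1 - 1) % b + 1, Nat.succ_lt_succ (Nat.mod_lt _ hb)⟩)

/-- The smash product functor `m : Γ × Γ → Γ` on morphisms, via the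
lexicographic identifications `𝐚 ∧ 𝐛 ≅ 𝐚𝐛`. -/
def mmap {a b a' b' : ℕ} (α : GHom a a') (β : GHom b b') : GHom (a * b) (a' * b') :=
  ⟨fun c => enc a' b' (α.1 (dec a b c).1) (β.1 (dec a b c).2), by
    simp [dec, enc, α.2, β.2]⟩

/-- The relation collapsing the wedge `K ∨ L ⊆ K × L` to a point. -/
def SmashRel (K L : Type) [Inhabited K] [Inhabited L] : K × L → K × L → Prop :=
  fun p q => (p.1 = default ∨ p.2 = default) ∧ (q.1 = default ∨ q.2 = default)

/-- The smash product of pointed sets. -/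
def Smash (K L : Type) [Inhabited K] [Inhabited L] := Quot (SmashRel K L)

instance (K L : Type) [Inhabited K] [Inhabited L] : Inhabited (Smash K L) :=
  ⟨Quot.mk _ (default, default)⟩

/-- The canonical cocone: for `γ : 𝐜 → 𝐚𝐛` in `Γ` and based maps `f : 𝐚 → K`,
`g : 𝐛 → L`, the based map `𝐜 → K ∧ L` given by `x ↦ f(i) ∧ g(j)` where
`γ(x) = (i,j)` under `𝐚𝐛 ≅ 𝐚 ∧ 𝐛`. -/
def usm (K L : Type) [Inhabited K] [Inhabited L] (c a b : ℕ)
    (γ : GHom c (a * b)) (p : BMap a K × BMap b L) : BMap c (Smash K L) :=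
  ⟨fun x => Quot.mk _ (p.1.1 (dec a b (γ.1 x)).1, p.2.1 (dec a b (γ.1 x)).2), by
    simp [γ.2, dec, p.1.2, p.2.2]
    rfl⟩
section Aux

lemma fin_eq_zero {n : ℕ} {x : Fin (n + 1)} (h : x.1 = 0) : x = 0 := by
  apply Fin.ext; simpa using h

lemma enc_of_zero {a b : ℕ} {i : Fin (a + 1)} {j : Fin (b + 1)}
    (h : i.1 = 0 ∨ j.1 = 0) : enc a b i j = 0 := by
  rw [enc, dif_pos h]

lemma dec_zero (a b : ℕ) : dec a b 0 = (0, 0) := by simp [dec]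

lemma dec_enc (a b : ℕ) (i : Fin (a + 1)) (j : Fin (b + 1))
    (hi : i.1 ≠ 0) (hj : j.1 ≠ 0) : dec a b (enc a b i j) = (i, j) := by
  have hb : 0 < b := by have := j.2; omega
  have henc : (enc a b i j).1 = (i.1 - 1) * b + j.1 := by
    rw [enc, dif_neg (by tauto)]
  have hne : (enc a b i j).1 ≠ 0 := by omega
  have hsub : (enc a b i j).1 - 1 = b * (i.1 - 1) + (j.1 - 1) := by
    rw [henc, Nat.mul_comm]; omega
  have hjb : j.1 - 1 < b := by have := j.2; omega
  have hdiv : ((enc a b i j).1 - 1) / b = i.1 - 1 := by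
    rw [hsub, Nat.mul_add_div hb, Nat.div_eq_of_lt hjb]; omega
  have hmod : ((enc a b i j).1 - 1) % b = j.1 - 1 := by
    rw [hsub, Nat.mul_add_mod, Nat.mod_eq_of_lt hjb]
  rw [dec, dif_neg hne]
  refine Prod.ext ?_ ?_
  · apply Fin.ext; show ((enc a b i j).1 - 1) / b + 1 = i.1
    rw [hdiv]; omega
  · apply Fin.ext; show ((enc a b i j).1 - 1) % b + 1 = j.1
    rw [hmod]; omega

lemma enc_dec (a b : ℕ) (y : Fin (a * b + 1)) :
    enc a b (dec a b y).1 (dec a b y).2 = y := by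
  by_cases hy : y.1 = 0
  · have : y = 0 := fin_eq_zero hy
    subst this
    rw [dec_zero]
    exact enc_of_zero (Or.inl rfl)
  · have hb : 0 < b := by
      rcases Nat.eq_zero_or_pos b with hb | hb
      · exfalso; have := y.2; have h0 : a * b = 0 := by rw [hb, Nat.mul_zero]
        omega
      · exact hb
    have hy2 : y.1 < a * b + 1 := y.2
    have hlt : y.1 - 1 < a * b := by omega
    have hq : (y.1 - 1) / b + 1 < a + 1 :=
      Nat.succ_lt_succ ((Nat.div_lt_iff_lt_mul hb).2 (by
        have : a * b = b * a := Nat.mul_comm a b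
        omega))
    have hr : (y.1 - 1) % b + 1 < b + 1 := Nat.succ_lt_succ (Nat.mod_lt _ hb)
    have hd : dec a b y = (⟨(y.1 - 1) / b + 1, hq⟩, ⟨(y.1 - 1) % b + 1, hr⟩) := by
      rw [dec, dif_neg hy]
    rw [hd]
    apply Fin.ext
    show (if h : (y.1 - 1) / b + 1 = 0 ∨ (y.1 - 1) % b + 1 = 0 then
      (0 : Fin (a * b + 1)) else _).1 = y.1
    rw [dif_neg (by simp)]
    show ((y.1 - 1) / b + 1 - 1) * b + ((y.1 - 1) % b + 1) = y.1
    rw [Nat.add_sub_cancel, Nat.mul_comm]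
    have := Nat.div_add_mod (y.1 - 1) b
    omega

end Aux
section Aux2

variable {K L : Type} [Inhabited K] [Inhabited L]

lemma smash_mk_eq {p q : K × L} :
    Quot.mk (SmashRel K L) p = Quot.mk (SmashRel K L) q ↔
      p = q ∨ ((p.1 = default ∨ p.2 = default) ∧ (q.1 = default ∨ q.2 = default)) := by
  constructor
  · intro h
    have h' := Quot.eq.1 h
    clear h
    induction h' with
    | rel x y hxy => exact Or.inr hxy
    | refl x => exact Or.inl rfl
    | symm x y _ ih =>
        rcases ih with h | h
        · exact Or.inl h.symm
        · exact Or.inr ⟨h.2, h.1⟩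
    | trans x y z _ _ ih1 ih2 =>
        rcases ih1 with rfl | h1
        · exact ih2
        · rcases ih2 with rfl | h2
          · exact Or.inr h1
          · exact Or.inr ⟨h1.1, h2.2⟩
  · rintro (rfl | ⟨hp, hq⟩)
    · rfl
    · exact Quot.sound ⟨hp, hq⟩

open Classical in
/-- A normalized representative of an element of the smash product. -/
noncomputable def nrep (s : Smash K L) : K × L :=
  if (Quot.out s).1 = default ∨ (Quot.out s).2 = default then (default, default)
  else Quot.out s

lemma nrep_mk (s : Smash K L) : Quot.mk (SmashRel K L) (nrep s) = s := by
  unfold nrep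
  split_ifs with h
  · conv_rhs => rw [← Quot.out_eq s]
    exact smash_mk_eq.2 (Or.inr ⟨Or.inl rfl, h⟩)
  · exact Quot.out_eq s

lemma nrep_deg {s : Smash K L} (h : (nrep s).1 = default ∨ (nrep s).2 = default) :
    nrep s = (default, default) := by
  by_cases h' : (Quot.out s).1 = default ∨ (Quot.out s).2 = default
  · unfold nrep; rw [if_pos h']
  · exfalso
    have he : nrep s = Quot.out s := by unfold nrep; rw [if_neg h']
    rw [he] at h
    exact h' h

open Classical in
lemma nrep_eq {p : K × L} {s : Smash K L} (h : Quot.mk (SmashRel K L) p = s) :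
    (if p.1 = default ∨ p.2 = default then ((default, default) : K × L) else p)
      = nrep s := by
  have h2 : Quot.mk (SmashRel K L) p = Quot.mk (SmashRel K L) (nrep s) := by
    rw [nrep_mk]; exact h
  rcases smash_mk_eq.1 h2 with h3 | ⟨hp, hq⟩
  · subst h3
    split_ifs with hd
    · exact (nrep_deg hd).symm
    · rfl
  · rw [if_pos hp]
    exact (nrep_deg hq).symm

lemma nrep_basepoint :
    nrep (Quot.mk (SmashRel K L) (default, default)) = (default, default) := by
  have h := nrep_eq (p := ((default : K), (default : L)))
    (s := Quot.mk (SmashRel K L) (default, default)) rfl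
  rw [if_pos (Or.inl rfl)] at h
  exact h.symm

end Aux2

section Aux3

/-- The diagonal `𝐜 → 𝐜 ∧ 𝐜`. -/
def gdiag (c : ℕ) : GHom c (c * c) := ⟨fun x => enc c c x x, by simp [enc]⟩

lemma dec_enc_diag (c : ℕ) (x : Fin (c + 1)) : dec c c (enc c c x x) = (x, x) := by
  by_cases hx : x.1 = 0
  · have hx0 : x = 0 := fin_eq_zero hx
    subst hx0
    rw [enc_of_zero (Or.inl rfl), dec_zero]
  · exact dec_enc _ _ _ _ hx hx

lemma gcomp_diag {c a b : ℕ} (α : GHom c a) (β : GHom c b) (x : Fin (c + 1)) :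
    (gcomp (gdiag c) (mmap α β)).1 x = enc a b (α.1 x) (β.1 x) := by
  show enc a b (α.1 (dec c c (enc c c x x)).1) (β.1 (dec c c (enc c c x x)).2) = _
  rw [dec_enc_diag]

/-- First projection of a `Γ`-morphism into a smash. -/
def decFst {c a b : ℕ} (γ : GHom c (a * b)) : GHom c a :=
  ⟨fun x => (dec a b (γ.1 x)).1, by
    show (dec a b (γ.1 0)).1 = 0; rw [γ.2, dec_zero]⟩

/-- Second projection of a `Γ`-morphism into a smash. -/
def decSnd {c a b : ℕ} (γ : GHom c (a * b)) : GHom c b :=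
  ⟨fun x => (dec a b (γ.1 x)).2, by
    show (dec a b (γ.1 0)).2 = 0; rw [γ.2, dec_zero]⟩

end Aux3
section Aux4

variable {K L : Type} [Inhabited K] [Inhabited L] {c : ℕ} {Z : Type}

open Classical

lemma swapF (v : ∀ a b : ℕ, GHom c (a * b) → BMap a K × BMap b L → Z)
    (hv : ∀ (a b a' b' : ℕ) (α : GHom a a') (β : GHom b b') (γ : GHom c (a * b))
        (f : BMap a' K) (g : BMap b' L),
        v a b γ (pull α f, pull β g) = v a' b' (gcomp γ (mmap α β)) (f, g))
    (F F' : BMap c K) (G : BMap c L)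
    (hd : ∀ x, G.1 x = default ∨ F.1 x = F'.1 x) :
    v c c (gdiag c) (F, G) = v c c (gdiag c) (F', G) := by
  have hbF : F.1 0 = F'.1 0 := by rw [F.2, F'.2]
  set δ : GHom c c := ⟨fun x => if G.1 x = default then 0 else x, by simp [G.2]⟩ with hδ
  set α : GHom c (c + c) :=
    ⟨fun x => ⟨x.1, by have := x.2; omega⟩, by apply Fin.ext; simp⟩ with hα
  set α' : GHom c (c + c) :=
    ⟨fun x => if F.1 x = F'.1 x then ⟨x.1, by have := x.2; omega⟩
      else ⟨c + x.1, by have := x.2; omega⟩, by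
        dsimp only
        rw [if_pos hbF]; apply Fin.ext; simp⟩ with hα'
  set f : BMap (c + c) K :=
    ⟨fun y => if h : y.1 ≤ c then F.1 ⟨y.1, by omega⟩
      else F'.1 ⟨y.1 - c, by have := y.2; omega⟩, by
        dsimp only
        rw [dif_pos (by simp)]
        show F.1 ⟨(0 : Fin (c + c + 1)).1, _⟩ = default
        have : (⟨(0 : Fin (c + c + 1)).1, by simp⟩ : Fin (c + 1)) = 0 := by
          apply Fin.ext; simp
        rw [this, F.2]⟩ with hf
  have hpf : pull α f = F := by
    apply Subtype.ext; funext x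
    show (if h : (x.1 : ℕ) ≤ c then F.1 ⟨x.1, _⟩ else _) = F.1 x
    rw [dif_pos (by have := x.2; omega)]
  have hpf' : pull α' f = F' := by
    apply Subtype.ext; funext x
    show f.1 (if F.1 x = F'.1 x then _ else _) = F'.1 x
    by_cases hx : F.1 x = F'.1 x
    · rw [if_pos hx]
      show (if h : (x.1 : ℕ) ≤ c then F.1 ⟨x.1, _⟩ else _) = F'.1 x
      rw [dif_pos (by have := x.2; omega)]
      exact hx.symm ▸ rfl
    · rw [if_neg hx]
      have hx0 : x.1 ≠ 0 := by
        intro h0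
        exact hx (by rw [fin_eq_zero h0, F.2, F'.2])
      show (if h : (c + x.1 : ℕ) ≤ c then _ else F'.1 ⟨c + x.1 - c, _⟩) = F'.1 x
      rw [dif_neg (by omega)]
      exact congrArg _ (Fin.ext (by show c + x.1 - c = x.1; omega))
  have hpG : pull δ G = G := by
    apply Subtype.ext; funext x
    show G.1 (if G.1 x = default then 0 else x) = G.1 x
    split_ifs with h
    · rw [G.2, h]
    · rfl
  have key : gcomp (gdiag c) (mmap α δ) = gcomp (gdiag c) (mmap α' δ) := by
    apply Subtype.ext; funext x
    rw [gcomp_diag, gcomp_diag]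
    by_cases hg : G.1 x = default
    · have hδx : δ.1 x = 0 := by rw [hδ]; exact if_pos hg
      rw [hδx, enc_of_zero (Or.inr rfl), enc_of_zero (Or.inr rfl)]
    · have hFx : F.1 x = F'.1 x := (hd x).resolve_left hg
      have hαx : α.1 x = α'.1 x := by
        rw [hα, hα']; exact (if_pos hFx).symm
      rw [hαx]
  calc v c c (gdiag c) (F, G) = v c c (gdiag c) (pull α f, pull δ G) := by
        rw [hpf, hpG]
    _ = v (c + c) c (gcomp (gdiag c) (mmap α δ)) (f, G) := hv _ _ _ _ _ _ _ _ _
    _ = v (c + c) c (gcomp (gdiag c) (mmap α' δ)) (f, G) := by rw [key]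
    _ = v c c (gdiag c) (pull α' f, pull δ G) := (hv _ _ _ _ _ _ _ _ _).symm
    _ = v c c (gdiag c) (F', G) := by rw [hpf', hpG]

lemma swapG (v : ∀ a b : ℕ, GHom c (a * b) → BMap a K × BMap b L → Z)
    (hv : ∀ (a b a' b' : ℕ) (α : GHom a a') (β : GHom b b') (γ : GHom c (a * b))
        (f : BMap a' K) (g : BMap b' L),
        v a b γ (pull α f, pull β g) = v a' b' (gcomp γ (mmap α β)) (f, g))
    (F : BMap c K) (G G' : BMap c L)
    (hd : ∀ x, F.1 x = default ∨ G.1 x = G'.1 x) :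
    v c c (gdiag c) (F, G) = v c c (gdiag c) (F, G') := by
  have hbG : G.1 0 = G'.1 0 := by rw [G.2, G'.2]
  set δ : GHom c c := ⟨fun x => if F.1 x = default then 0 else x, by simp [F.2]⟩ with hδ
  set β : GHom c (c + c) :=
    ⟨fun x => ⟨x.1, by have := x.2; omega⟩, by apply Fin.ext; simp⟩ with hβ
  set β' : GHom c (c + c) :=
    ⟨fun x => if G.1 x = G'.1 x then ⟨x.1, by have := x.2; omega⟩
      else ⟨c + x.1, by have := x.2; omega⟩, by
        dsimp only
        rw [if_pos hbG]; apply Fin.ext; simp⟩ with hβ'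
  set g : BMap (c + c) L :=
    ⟨fun y => if h : y.1 ≤ c then G.1 ⟨y.1, by omega⟩
      else G'.1 ⟨y.1 - c, by have := y.2; omega⟩, by
        dsimp only
        rw [dif_pos (by simp)]
        show G.1 ⟨(0 : Fin (c + c + 1)).1, _⟩ = default
        have : (⟨(0 : Fin (c + c + 1)).1, by simp⟩ : Fin (c + 1)) = 0 := by
          apply Fin.ext; simp
        rw [this, G.2]⟩ with hg
  have hpg : pull β g = G := by
    apply Subtype.ext; funext x
    show (if h : (x.1 : ℕ) ≤ c then G.1 ⟨x.1, _⟩ else _) = G.1 x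
    rw [dif_pos (by have := x.2; omega)]
  have hpg' : pull β' g = G' := by
    apply Subtype.ext; funext x
    show g.1 (if G.1 x = G'.1 x then _ else _) = G'.1 x
    by_cases hx : G.1 x = G'.1 x
    · rw [if_pos hx]
      show (if h : (x.1 : ℕ) ≤ c then G.1 ⟨x.1, _⟩ else _) = G'.1 x
      rw [dif_pos (by have := x.2; omega)]
      exact hx.symm ▸ rfl
    · rw [if_neg hx]
      have hx0 : x.1 ≠ 0 := by
        intro h0
        exact hx (by rw [fin_eq_zero h0, G.2, G'.2])
      show (if h : (c + x.1 : ℕ) ≤ c then _ else G'.1 ⟨c + x.1 - c, _⟩) = G'.1 x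
      rw [dif_neg (by omega)]
      exact congrArg _ (Fin.ext (by show c + x.1 - c = x.1; omega))
  have hpF : pull δ F = F := by
    apply Subtype.ext; funext x
    show F.1 (if F.1 x = default then 0 else x) = F.1 x
    split_ifs with h
    · rw [F.2, h]
    · rfl
  have key : gcomp (gdiag c) (mmap δ β) = gcomp (gdiag c) (mmap δ β') := by
    apply Subtype.ext; funext x
    rw [gcomp_diag, gcomp_diag]
    by_cases hF : F.1 x = default
    · have hδx : δ.1 x = 0 := by rw [hδ]; exact if_pos hF
      rw [hδx, enc_of_zero (Or.inl rfl), enc_of_zero (Or.inl rfl)]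
    · have hGx : G.1 x = G'.1 x := (hd x).resolve_left hF
      have hβx : β.1 x = β'.1 x := by
        rw [hβ, hβ']; exact (if_pos hGx).symm
      rw [hβx]
  calc v c c (gdiag c) (F, G) = v c c (gdiag c) (pull δ F, pull β g) := by
        rw [hpF, hpg]
    _ = v c (c + c) (gcomp (gdiag c) (mmap δ β)) (F, g) := hv _ _ _ _ _ _ _ _ _
    _ = v c (c + c) (gcomp (gdiag c) (mmap δ β')) (F, g) := by rw [key]
    _ = v c c (gdiag c) (pull δ F, pull β' g) := (hv _ _ _ _ _ _ _ _ _).symm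
    _ = v c c (gdiag c) (F, G') := by rw [hpF, hpg']

end Aux4
section Aux5

variable {K L : Type} [Inhabited K] [Inhabited L] {c : ℕ} {Z : Type}

open Classical in
lemma nrep_eq' {k : K} {l : L} {s : Smash K L}
    (h : Quot.mk (SmashRel K L) (k, l) = s) :
    nrep s = (if k = default ∨ l = default then (default, default) else (k, l)) := by
  have h2 := nrep_eq h
  by_cases hd : k = default ∨ l = default
  · rw [if_pos hd, ← h2, if_pos hd]
  · rw [if_neg hd, ← h2, if_neg hd]

open Classical in
/-- Normalize the first component of a pair of based maps. -/
noncomputable def nBK (F : BMap c K) (G : BMap c L) : BMap c K :=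
  ⟨fun x => if F.1 x = default ∨ G.1 x = default then default else F.1 x, by
    simp [F.2]⟩

open Classical in
/-- Normalize the second component of a pair of based maps. -/
noncomputable def nBL (F : BMap c K) (G : BMap c L) : BMap c L :=
  ⟨fun x => if F.1 x = default ∨ G.1 x = default then default else G.1 x, by
    simp [F.2]⟩

open Classical in
lemma norm_eq (v : ∀ a b : ℕ, GHom c (a * b) → BMap a K × BMap b L → Z)
    (hv : ∀ (a b a' b' : ℕ) (α : GHom a a') (β : GHom b b') (γ : GHom c (a * b))
        (f : BMap a' K) (g : BMap b' L),
        v a b γ (pull α f, pull β g) = v a' b' (gcomp γ (mmap α β)) (f, g))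
    (F : BMap c K) (G : BMap c L) :
    v c c (gdiag c) (F, G) = v c c (gdiag c) (nBK F G, nBL F G) := by
  set G₁ : BMap c L :=
    ⟨fun x => if F.1 x = default then default else G.1 x, by simp [F.2]⟩ with hG₁
  have s1 : v c c (gdiag c) (F, G) = v c c (gdiag c) (F, G₁) := by
    refine swapG v hv F G G₁ (fun x => ?_)
    by_cases h : F.1 x = default
    · exact Or.inl h
    · refine Or.inr ?_
      show G.1 x = if F.1 x = default then default else G.1 x
      rw [if_neg h]
  have s2 : v c c (gdiag c) (F, G₁) = v c c (gdiag c) (nBK F G, G₁) := by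
    refine swapF v hv F (nBK F G) G₁ (fun x => ?_)
    by_cases hF : F.1 x = default
    · refine Or.inr ?_
      show F.1 x = if F.1 x = default ∨ G.1 x = default then default else F.1 x
      rw [if_pos (Or.inl hF), hF]
    · by_cases hG : G.1 x = default
      · refine Or.inl ?_
        show (if F.1 x = default then default else G.1 x) = default
        rw [if_neg hF]; exact hG
      · refine Or.inr ?_
        show F.1 x = if F.1 x = default ∨ G.1 x = default then default else F.1 x
        rw [if_neg (by tauto)]
  have s3 : G₁ = nBL F G := by
    apply Subtype.ext; funext x
    show (if F.1 x = default then default else G.1 x)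
      = if F.1 x = default ∨ G.1 x = default then default else G.1 x
    by_cases hF : F.1 x = default
    · rw [if_pos hF, if_pos (Or.inl hF)]
    · rw [if_neg hF]
      by_cases hG : G.1 x = default
      · rw [if_pos (Or.inr hG)]; exact hG
      · rw [if_neg (by tauto)]
  rw [s1, s2, s3]

lemma reduce (v : ∀ a b : ℕ, GHom c (a * b) → BMap a K × BMap b L → Z)
    (hv : ∀ (a b a' b' : ℕ) (α : GHom a a') (β : GHom b b') (γ : GHom c (a * b))
        (f : BMap a' K) (g : BMap b' L),
        v a b γ (pull α f, pull β g) = v a' b' (gcomp γ (mmap α β)) (f, g))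
    (a b : ℕ) (γ : GHom c (a * b)) (f : BMap a K) (g : BMap b L) :
    v a b γ (f, g) = v c c (gdiag c) (pull (decFst γ) f, pull (decSnd γ) g) := by
  have h := hv c c a b (decFst γ) (decSnd γ) (gdiag c) f g
  have hγ : gcomp (gdiag c) (mmap (decFst γ) (decSnd γ)) = γ := by
    apply Subtype.ext; funext x
    rw [gcomp_diag]
    show enc a b (dec a b (γ.1 x)).1 (dec a b (γ.1 x)).2 = γ.1 x
    exact enc_dec a b (γ.1 x)
  rw [hγ] at h
  exact h.symm

/-- The first component of a normalized pointwise representative of a based map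
into the smash product. -/
noncomputable def nFh (h : BMap c (Smash K L)) : BMap c K :=
  ⟨fun x => (nrep (h.1 x)).1, by
    show (nrep (h.1 0)).1 = default
    rw [h.2, show (default : Smash K L)
        = Quot.mk (SmashRel K L) (default, default) from rfl, nrep_basepoint]⟩

/-- The second component of a normalized pointwise representative of a based map
into the smash product. -/
noncomputable def nGh (h : BMap c (Smash K L)) : BMap c L :=
  ⟨fun x => (nrep (h.1 x)).2, by
    show (nrep (h.1 0)).2 = default
    rw [h.2, show (default : Smash K L)
        = Quot.mk (SmashRel K L) (default, default) from rfl, nrep_basepoint]⟩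

lemma usm_nrep (h : BMap c (Smash K L)) :
    usm K L c c c (gdiag c) (nFh h, nGh h) = h := by
  apply Subtype.ext; funext x
  show Quot.mk (SmashRel K L)
      ((nFh h).1 (dec c c (enc c c x x)).1, (nGh h).1 (dec c c (enc c c x x)).2) = h.1 x
  rw [dec_enc_diag]
  show Quot.mk (SmashRel K L) ((nrep (h.1 x)).1, (nrep (h.1 x)).2) = h.1 x
  exact nrep_mk (h.1 x)

end Aux5

/-- The paper's Lemma `m_*(K^× × L^×) = (K ∧ L)^×`, in pointwise form: the left
Kan extension along the smash functor `m : Γ × Γ → Γ` (as a Kan extension of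
contravariant `Set`-valued functors, computed at `𝐜` as the colimit over the
comma category `(𝐜 ↓ m)`) of `(𝐚,𝐛) ↦ Map(𝐚,K) × Map(𝐛,L)` is naturally
isomorphic to `𝐜 ↦ Map(𝐜, K ∧ L)`: the canonical family `usm` is a cocone on the
comma category, and it is universal among such cocones. -/
theorem lan_smash (K L : Type) [Inhabited K] [Inhabited L] (c : ℕ) :
    (∀ (a b a' b' : ℕ) (α : GHom a a') (β : GHom b b') (γ : GHom c (a * b))
        (f : BMap a' K) (g : BMap b' L),
        usm K L c a b γ (pull α f, pull β g) =
          usm K L c a' b' (gcomp γ (mmap α β)) (f, g)) ∧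
    (∀ (Z : Type) (v : ∀ a b : ℕ, GHom c (a * b) → BMap a K × BMap b L → Z),
      (∀ (a b a' b' : ℕ) (α : GHom a a') (β : GHom b b') (γ : GHom c (a * b))
          (f : BMap a' K) (g : BMap b' L),
          v a b γ (pull α f, pull β g) = v a' b' (gcomp γ (mmap α β)) (f, g)) →
      ∃! w : BMap c (Smash K L) → Z,
        ∀ (a b : ℕ) (γ : GHom c (a * b)) (p : BMap a K × BMap b L),
          v a b γ p = w (usm K L c a b γ p)) := by
    classical
  constructor
  · -- the canonical family is a cocone
    intro a b a' b' α β γ f g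
    apply Subtype.ext; funext x
    show Quot.mk (SmashRel K L)
        (f.1 (α.1 (dec a b (γ.1 x)).1), g.1 (β.1 (dec a b (γ.1 x)).2))
      = Quot.mk (SmashRel K L)
          (f.1 (dec a' b' (enc a' b' (α.1 (dec a b (γ.1 x)).1)
              (β.1 (dec a b (γ.1 x)).2))).1,
           g.1 (dec a' b' (enc a' b' (α.1 (dec a b (γ.1 x)).1)
              (β.1 (dec a b (γ.1 x)).2))).2)
    set i := (dec a b (γ.1 x)).1 with hi
    set j := (dec a b (γ.1 x)).2 with hj
    by_cases hz : (α.1 i).1 = 0 ∨ (β.1 j).1 = 0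
    · rw [enc_of_zero hz, dec_zero]
      show Quot.mk (SmashRel K L) (f.1 (α.1 i), g.1 (β.1 j))
        = Quot.mk (SmashRel K L) (f.1 0, g.1 0)
      rw [f.2, g.2]
      apply Quot.sound
      constructor
      · rcases hz with h | h
        · left
          show f.1 (α.1 i) = default
          rw [fin_eq_zero h, f.2]
        · right
          show g.1 (β.1 j) = default
          rw [fin_eq_zero h, g.2]
      · left; rfl
    · push_neg at hz
      rw [dec_enc a' b' _ _ hz.1 hz.2]
  · -- universality
    intro Z v hv
    have hkey : ∀ (a b : ℕ) (γ : GHom c (a * b)) (p : BMap a K × BMap b L),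
        v a b γ p
          = v c c (gdiag c) (nFh (usm K L c a b γ p), nGh (usm K L c a b γ p)) := by
      intro a b γ p
      obtain ⟨f, g⟩ := p
      rw [reduce v hv a b γ f g,
        norm_eq v hv (pull (decFst γ) f) (pull (decSnd γ) g)]
      have e1 : nBK (pull (decFst γ) f) (pull (decSnd γ) g)
          = nFh (usm K L c a b γ (f, g)) := by
        apply Subtype.ext; funext x
        show (if (pull (decFst γ) f).1 x = default ∨ (pull (decSnd γ) g).1 x = default
            then default else (pull (decFst γ) f).1 x)
          = (nrep ((usm K L c a b γ (f, g)).1 x)).1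
        have hmk : Quot.mk (SmashRel K L)
            ((pull (decFst γ) f).1 x, (pull (decSnd γ) g).1 x)
            = (usm K L c a b γ (f, g)).1 x := rfl
        rw [nrep_eq' hmk]
        split_ifs <;> rfl
      have e2 : nBL (pull (decFst γ) f) (pull (decSnd γ) g)
          = nGh (usm K L c a b γ (f, g)) := by
        apply Subtype.ext; funext x
        show (if (pull (decFst γ) f).1 x = default ∨ (pull (decSnd γ) g).1 x = default
            then default else (pull (decSnd γ) g).1 x)
          = (nrep ((usm K L c a b γ (f, g)).1 x)).2
        have hmk : Quot.mk (SmashRel K L)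
            ((pull (decFst γ) f).1 x, (pull (decSnd γ) g).1 x)
            = (usm K L c a b γ (f, g)).1 x := rfl
        rw [nrep_eq' hmk]
        split_ifs <;> rfl
      rw [e1, e2]
    refine ⟨fun h => v c c (gdiag c) (nFh h, nGh h), ?_, ?_⟩
    · intro a b γ p
      exact hkey a b γ p
    · intro w' hw'
      funext h
      have hw : v c c (gdiag c) (nFh h, nGh h)
          = w' (usm K L c c c (gdiag c) (nFh h, nGh h)) :=
        hw' c c (gdiag c) (nFh h, nGh h)
      rw [usm_nrep h] at hw
      exact hw.symm
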